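/- Let X be a countable set, w : X → ℝ≥0 a proper weight function, and (f_k)_{k≥1} a sequence of nondecreasing functions ℝ≥0 → ℝ with strictly positive values satisfying 2 f_k(t) ≤ f_{k+1}(t) for all t ≥ 0 and k ≥ 1. Suppose ψ : X → ℂ is such that for every k there exists x ∈ X with |ψ(x)| ≥ f_k(w(x)). Then there exists α : X → ℂ such that for every n the family x ↦ |α(x)| f_n(w(x)) is summable, but the family x ↦ |α(x)·ψ(x)| is not summable. (This is the key construction in Lemma 1.2.4, identifying the continuous dual of H_{B,w}(X) with the space of B-bounded functions.) -/

import Mathlib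

open NNReal

noncomputable def auxState {X : Type*} [DecidableEq X] (xf : ℕ → X) (nf : Finset X → ℕ → ℕ) :
    ℕ → X × Finset X × ℕ
  | 0 => (xf 0, {xf 0}, 0)
  | k+1 =>
    let p := auxState xf nf k
    let m' := nf p.2.1 p.2.2
    (xf m', insert (xf m') p.2.1, m')

set_option maxHeartbeats 800000 in
/-- **Key construction in Lemma 1.2.4.** Let `w` be a proper weight on a countable set `X`
and `(f k)` a sequence of nondecreasing positive functions with `2 f_k ≤ f_{k+1}`.
If `ψ` is not dominated by any `f_k` (for every `k` some `x` has `|ψ x| ≥ f_k (w x)`),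
then there is `α` lying in all the weighted ℓ¹-spaces for which `α·ψ` is not ℓ¹. -/
theorem stmt_4 {X : Type*} [Countable X] (w : X → ℝ≥0)
    (hw : ∀ C : ℝ≥0, {x : X | w x ≤ C}.Finite)
    (f : ℕ → ℝ≥0 → ℝ)
    (hmono : ∀ k, Monotone (f k))
    (hpos : ∀ k t, 0 < f k t)
    (hdouble : ∀ k t, 2 * f k t ≤ f (k + 1) t)
    (ψ : X → ℂ)
    (hψ : ∀ k : ℕ, ∃ x : X, f k (w x) ≤ ‖ψ x‖) :
    ∃ α : X → ℂ,
      (∀ n : ℕ, Summable fun x => ‖α x‖ * f n (w x)) ∧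
      ¬ Summable (fun x => ‖α x * ψ x‖) := by
  classical
  have hmonoIdx : ∀ t : ℝ≥0, Monotone fun k => f k t := by
    intro t
    apply monotone_nat_of_le_succ
    intro k
    have h1 : f k t ≤ 2 * f k t := by nlinarith [hpos k t]
    exact h1.trans (hdouble k t)
  have hpow : ∀ (k m : ℕ) (t : ℝ≥0), 2 ^ m * f k t ≤ f (k + m) t := by
    intro k m t
    induction m with
    | zero => simp
    | succ m ih =>
      have h2 : 2 * (2 ^ m * f k t) ≤ 2 * f (k + m) t := by linarith
      calc 2 ^ (m+1) * f k t = 2 * (2 ^ m * f k t) := by ring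
        _ ≤ 2 * f (k + m) t := h2
        _ ≤ f (k + m + 1) t := hdouble _ _
  have hbig : ∀ (t : ℝ≥0) (c : ℝ), ∃ m : ℕ, c < f m t := by
    intro t c
    obtain ⟨n, hn⟩ := exists_nat_gt (c / f 0 t)
    refine ⟨n, ?_⟩
    have h0 := hpos 0 t
    have hc : c < n * f 0 t := by
      have := (div_lt_iff₀ h0).mp hn
      linarith
    have hn2 : (n : ℝ) ≤ 2 ^ n := by
      exact_mod_cast (Nat.lt_two_pow_self (n := n)).le
    have := hpow 0 n t
    simp only [Nat.zero_add] at this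
    nlinarith
  have hstep : ∀ (s : Finset X) (m : ℕ), ∃ m', m < m' ∧ ∀ x ∈ s, ‖ψ x‖ < f m' (w x) := by
    intro s m
    have : ∀ x ∈ s, ∃ m0 : ℕ, ‖ψ x‖ < f m0 (w x) := fun x _ => hbig (w x) _
    choose m0 hm0 using this
    refine ⟨(s.sup fun x => if h : x ∈ s then m0 x h else 0) ⊔ (m + 1), ?_, ?_⟩
    · omega
    · intro x hx
      have hle : m0 x hx ≤ (s.sup fun x => if h : x ∈ s then m0 x h else 0) ⊔ (m + 1) := by
        refine le_trans ?_ le_sup_left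
        have := Finset.le_sup (f := fun x => if h : x ∈ s then m0 x h else 0) hx
        simpa [hx] using this
      exact lt_of_lt_of_le (hm0 x hx) (hmonoIdx (w x) hle)
  choose nf hnf1 hnf2 using hstep
  choose xf hxf using hψ
  set st := auxState xf nf with hst
  set y : ℕ → X := fun k => (st k).1 with hy'
  set g : ℕ → ℕ := fun k => (st k).2.2 with hg'
  set s : ℕ → Finset X := fun k => (st k).2.1 with hs'
  have hsucc : ∀ k, st (k+1) = (xf (nf (s k) (g k)), insert (xf (nf (s k) (g k))) (s k),
      nf (s k) (g k)) := by
    intro k; rfl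
  have hgsucc : ∀ k, g (k + 1) = nf (s k) (g k) := by
    intro k; show (st (k+1)).2.2 = _; rw [hsucc]
  have hysucc : ∀ k, y (k + 1) = xf (g (k + 1)) := by
    intro k; rw [hgsucc]; show (st (k+1)).1 = _; rw [hsucc]
  have hssucc : ∀ k, s (k + 1) = insert (y (k + 1)) (s k) := by
    intro k
    show (st (k+1)).2.1 = insert ((st (k+1)).1) ((st k).2.1)
    rw [hsucc]
  have hy0 : y 0 = xf 0 := rfl
  have hg0 : g 0 = 0 := rfl
  have hgmono : StrictMono g := by
    apply strictMono_nat_of_lt_succ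
    intro k
    rw [hgsucc]
    exact hnf1 (s k) (g k)
  have hkg : ∀ k, k ≤ g k := fun k => hgmono.le_apply
  have hyψ : ∀ k, f (g k) (w (y k)) ≤ ‖ψ (y k)‖ := by
    intro k
    cases k with
    | zero => rw [hy0, hg0]; exact hxf 0
    | succ k => rw [hysucc]; exact hxf (g (k+1))
  have hmem : ∀ i k, i ≤ k → y i ∈ s k := by
    intro i k
    induction k with
    | zero =>
      intro h; interval_cases i
      show y 0 ∈ (st 0).2.1
      rw [hy0]; exact Finset.mem_singleton_self _
    | succ k ih =>
      intro h
      rw [hssucc]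
      by_cases h' : i = k + 1
      · subst h'; exact Finset.mem_insert_self _ _
      · exact Finset.mem_insert_of_mem (ih (by omega))
  have hlater : ∀ i k, i < k → ‖ψ (y i)‖ < f (g k) (w (y i)) := by
    intro i k hik
    obtain ⟨j, rfl⟩ : ∃ j, k = j + 1 := ⟨k - 1, by omega⟩
    have := hnf2 (s j) (g j) (y i) (hmem i j (by omega))
    rwa [← hgsucc] at this
  have hinj : Function.Injective y := by
    have key : ∀ i k, i < k → y i ≠ y k := by
      intro i k hik h
      have h1 := hlater i k hik
      rw [h] at h1
      exact absurd (hyψ k) (not_le.mpr h1)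
    intro i k h
    rcases lt_trichotomy i k with h' | h' | h'
    · exact absurd h (key i k h')
    · exact h'
    · exact absurd h.symm (key k i h')
  have hψpos : ∀ k, 0 < ‖ψ (y k)‖ := fun k => lt_of_lt_of_le (hpos _ _) (hyψ k)
  clear_value y g s st
  refine ⟨fun x => if x ∈ Set.range y then ((‖ψ x‖)⁻¹ : ℝ) else 0, ?_, ?_⟩
  · intro n
    set F : X → ℝ := fun x =>
      ‖(if x ∈ Set.range y then ((‖ψ x‖)⁻¹ : ℝ) else (0:ℂ) : ℂ)‖ * f n (w x)
      with hF
    have hvanish : ∀ x ∉ Set.range y, F x = 0 := by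
      intro x hx
      simp only [hF]
      rw [if_neg hx]
      simp
    rw [← hinj.summable_iff hvanish]
    have hFy : ∀ k, F (y k) = (‖ψ (y k)‖)⁻¹ * f n (w (y k)) := by
      intro k
      have hr : y k ∈ Set.range y := ⟨k, rfl⟩
      simp [hF, hr, Complex.norm_real, Real.norm_eq_abs,
        abs_of_nonneg (inv_nonneg.mpr (norm_nonneg (ψ (y k))))]
    apply (_root_.summable_nat_add_iff n).mp
    refine Summable.of_nonneg_of_le (f := fun k => ((1:ℝ)/2) ^ k) ?_ ?_ summable_geometric_two
    · intro k
      rw [Function.comp_apply, hFy]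
      exact mul_nonneg (inv_nonneg.mpr (norm_nonneg _)) (hpos n _).le
    · intro k
      rw [Function.comp_apply, hFy]
      have h2 := hψpos (k + n)
      have h1 : 2 ^ k * f n (w (y (k + n))) ≤ ‖ψ (y (k + n))‖ := by
        calc 2 ^ k * f n (w (y (k + n))) ≤ f (n + k) (w (y (k + n))) := hpow n k _
          _ ≤ f (g (k + n)) (w (y (k + n))) := hmonoIdx _ (by have := hkg (k+n); omega)
          _ ≤ ‖ψ (y (k + n))‖ := hyψ _
      rw [inv_mul_le_iff₀ h2]
      have hp : (0:ℝ) < (1/2:ℝ)^k := by positivity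
      have hcan : ((1/2:ℝ)^k) * (2:ℝ)^k = 1 := by
        rw [one_div, inv_pow]
        exact inv_mul_cancel₀ (by positivity)
      show f n (w (y (k + n))) ≤ ‖ψ (y (k + n))‖ * (1/2) ^ k
      calc f n (w (y (k + n))) = (1/2)^k * (2^k * f n (w (y (k + n)))) := by
            rw [← mul_assoc, hcan, one_mul]
        _ ≤ (1/2)^k * ‖ψ (y (k + n))‖ := mul_le_mul_of_nonneg_left h1 hp.le
        _ = ‖ψ (y (k + n))‖ * (1/2)^k := mul_comm _ _
  · intro hS
    have hSy := hS.comp_injective hinj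
    have heq : ∀ k : ℕ, ‖(if y k ∈ Set.range y then
        (((‖ψ (y k)‖)⁻¹ : ℝ) : ℂ) else 0) * ψ (y k)‖ = 1 := by
      intro k
      have hr : y k ∈ Set.range y := ⟨k, rfl⟩
      have h2 := hψpos k
      simp only [hr, if_true, norm_mul, Complex.norm_real, Real.norm_eq_abs,
        abs_of_nonneg (inv_nonneg.mpr (norm_nonneg (ψ (y k))))]
      exact inv_mul_cancel₀ h2.ne'
    have hone : Summable (fun _ : ℕ => (1:ℝ)) := by
      refine hSy.congr fun k => ?_
      rw [Function.comp_apply]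
      exact heq k
    have h0 := hone.tendsto_atTop_zero
    have h1 : Filter.Tendsto (fun _ : ℕ => (1:ℝ)) Filter.atTop (nhds 1) := tendsto_const_nhds
    have := tendsto_nhds_unique h0 h1
    norm_num at this
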